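/- Consider the extactic polynomial E = z(-C'(y²+z²) + x(A' - B'y)) where A' is any homogeneous quadratic and B', C' any homogeneous linear polynomials in R[x,y,z] with C' not identically zero on the plane x=0 (i.e., C'(0,y,z) ≠ 0 as a polynomial). Then E cannot be written as a product of four real linear factors each of the form by+cz. -/
import Mathlib


open MvPolynomial

theorem stmt_13 (A' B' C' E : MvPolynomial (Fin 3) ℝ)
    (hA' : A'.IsHomogeneous 2) (hB' : B'.IsHomogeneous 1) (hC' : C'.IsHomogeneous 1)
    (hC'x : (aeval ![0, X 1, X 2] C' : MvPolynomial (Fin 3) ℝ) ≠ 0)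
    (hE : E = X 2 * (-C' * ((X 1) ^ 2 + (X 2) ^ 2) + X 0 * (A' - B' * X 1))) :
    ¬ ∃ b c : Fin 4 → ℝ, E = ∏ i, (C (b i) * X 1 + C (c i) * X 2) := by
  rintro ⟨b, c, hfac⟩
  -- evaluate at (0, I, 1)
  have hfE : aeval (![0, Complex.I, 1] : Fin 3 → ℂ) E = 0 := by
    rw [hE]
    simp [Complex.I_sq]
  rw [hfac, map_prod] at hfE
  obtain ⟨i, -, hi⟩ := Finset.prod_eq_zero_iff.mp hfE
  simp only [map_add, map_mul, aeval_C, aeval_X] at hi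
  have hi' : (b i : ℂ) * Complex.I + (c i : ℂ) = 0 := by
    simpa using hi
  have hb : b i = 0 := by
    have := congrArg Complex.im hi'
    simpa using this
  have hc : c i = 0 := by
    have := congrArg Complex.re hi'
    simpa using this
  have hE0 : E = 0 := by
    rw [hfac]
    exact Finset.prod_eq_zero (Finset.mem_univ i) (by simp [hb, hc])
  rw [hE0] at hE
  have h := congrArg (aeval (![0, X 1, X 2] : Fin 3 → MvPolynomial (Fin 3) ℝ)) hE
  simp only [map_zero, map_mul, map_add, map_neg, map_sub, map_pow, aeval_X] at h
  simp only [Matrix.cons_val_zero, Matrix.cons_val_one, Matrix.head_cons,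
    Matrix.cons_val_two, Matrix.tail_cons, zero_mul, add_zero] at h
  have h12 : (X 1 ^ 2 + X 2 ^ 2 : MvPolynomial (Fin 3) ℝ) ≠ 0 := by
    intro h'
    have := congrArg (eval (![0, 1, 0] : Fin 3 → ℝ)) h'
    simp at this
  have hX2 : (X 2 : MvPolynomial (Fin 3) ℝ) ≠ 0 := X_ne_zero _
  rcases mul_eq_zero.mp h.symm with h' | h'
  · exact hX2 h'
  · rcases mul_eq_zero.mp h' with h'' | h''
    · exact hC'x (by simpa using h'')
    · exact h12 h''
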